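/- arXiv:2006.08408 — 2 statements merged into one kernel-verified Lean document; each statement's English description precedes it below -/
import Mathlib

section
/- In the graph $\Gamma^{a,b}_{k,\ell,W}$ with $W > \ell \geq 1$: if for every index $i \in [k^2]$ at least one of the edges $p_i$ or $q_i$ is present (i.e., $a_i = 0$ or $b_i = 0$ for all $i$), then every pair of vertices is at distance at most $W + 2\ell$; and if there exists $i$ with both edges absent (i.e., $a_i = b_i = 1$), then some pair of vertices has distance at least $2W + \ell$. -/
open scoped ENNReal

/-- Total weight of a walk with edge weights `w`. -/
noncomputable def walkWeight {V : Type*} (G : SimpleGraph V) (w : V → V → ℝ≥0∞)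
    {u v : V} (p : G.Walk u v) : ℝ≥0∞ :=
  (p.darts.map fun d => w d.toProd.1 d.toProd.2).sum

/-- Weighted shortest-path distance (∞ if not connected). -/
noncomputable def wdist {V : Type*} (G : SimpleGraph V) (w : V → V → ℝ≥0∞)
    (u v : V) : ℝ≥0∞ :=
  ⨅ p : G.Walk u v, walkWeight G w p

/-- Vertices of the lower-bound graph Γ^{a,b}_{k,ℓ,W}: the four cliques
`V1, V2, U1, U2` (each of size `k`), the internal vertices `P1 i t`, `P2 i t`
of the matching paths of `ℓ` edges (so `ℓ - 1` internal vertices each), the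
internal vertices `M t` of the hub path, and the two hubs `vhat`, `uhat`. -/
inductive GV (k ℓ : ℕ) : Type
  | V1 (i : Fin k) : GV k ℓ
  | V2 (i : Fin k) : GV k ℓ
  | U1 (i : Fin k) : GV k ℓ
  | U2 (i : Fin k) : GV k ℓ
  | P1 (i : Fin k) (t : Fin (ℓ - 1)) : GV k ℓ
  | P2 (i : Fin k) (t : Fin (ℓ - 1)) : GV k ℓ
  | M (t : Fin (ℓ - 1)) : GV k ℓ
  | vhat : GV k ℓ
  | uhat : GV k ℓ

/-- Base edge relation of Γ^{a,b}_{k,ℓ,W}: cliques on `V1`,`V2`,`U1`,`U2`;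
hub edges from `vhat` to `V1 ∪ V2` and from `uhat` to `U1 ∪ U2`; the matching
paths of `ℓ` unit edges between `V1 i` and `U1 i`, between `V2 i` and `U2 i`,
and between the hubs; and the bit edges: `{V1 i, V2 j}` present iff `a i j = false`
and `{U1 i, U2 j}` present iff `b i j = false`. -/
def gammaRel (k ℓ : ℕ) (a b : Fin k → Fin k → Bool) : GV k ℓ → GV k ℓ → Prop :=
  fun x y => match x, y with
  | .V1 _, .V1 _ => True
  | .V2 _, .V2 _ => True
  | .U1 _, .U1 _ => True
  | .U2 _, .U2 _ => True
  | .V1 i, .V2 j => a i j = false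
  | .U1 i, .U2 j => b i j = false
  | .vhat, .V1 _ => True
  | .vhat, .V2 _ => True
  | .uhat, .U1 _ => True
  | .uhat, .U2 _ => True
  | .V1 i, .U1 j => i = j ∧ ℓ ≤ 1
  | .V1 i, .P1 j t => i = j ∧ t.val = 0
  | .P1 i t, .U1 j => i = j ∧ t.val = ℓ - 2
  | .P1 i t, .P1 j s => i = j ∧ t.val + 1 = s.val
  | .V2 i, .U2 j => i = j ∧ ℓ ≤ 1
  | .V2 i, .P2 j t => i = j ∧ t.val = 0
  | .P2 i t, .U2 j => i = j ∧ t.val = ℓ - 2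
  | .P2 i t, .P2 j s => i = j ∧ t.val + 1 = s.val
  | .vhat, .uhat => ℓ ≤ 1
  | .vhat, .M t => t.val = 0
  | .M t, .uhat => t.val = ℓ - 2
  | .M t, .M s => t.val + 1 = s.val
  | _, _ => False

/-- The graph Γ^{a,b}_{k,ℓ,W} (symmetrized, loopless). -/
def Gamma (k ℓ : ℕ) (a b : Fin k → Fin k → Bool) : SimpleGraph (GV k ℓ) :=
  SimpleGraph.fromRel (gammaRel k ℓ a b)

/-- Edge weights of Γ^{a,b}_{k,ℓ,W}: weight `Wt` on clique, hub and bit edges,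
weight 1 on all path edges. -/
noncomputable def gammaW (k ℓ : ℕ) (Wt : ℝ≥0∞) : GV k ℓ → GV k ℓ → ℝ≥0∞ :=
  fun x y => match x, y with
  | .V1 _, .V1 _ => Wt
  | .V2 _, .V2 _ => Wt
  | .U1 _, .U1 _ => Wt
  | .U2 _, .U2 _ => Wt
  | .V1 _, .V2 _ => Wt
  | .V2 _, .V1 _ => Wt
  | .U1 _, .U2 _ => Wt
  | .U2 _, .U1 _ => Wt
  | .vhat, .V1 _ => Wt
  | .V1 _, .vhat => Wt
  | .vhat, .V2 _ => Wt
  | .V2 _, .vhat => Wt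
  | .uhat, .U1 _ => Wt
  | .U1 _, .uhat => Wt
  | .uhat, .U2 _ => Wt
  | .U2 _, .uhat => Wt
  | _, _ => 1


section Infra
variable {V : Type*} (G : SimpleGraph V) (w : V → V → ℝ≥0∞)

variable {V : Type*} (G : SimpleGraph V) (w : V → V → ℝ≥0∞)

lemma walkWeight_nil {u : V} : walkWeight G w (SimpleGraph.Walk.nil : G.Walk u u) = 0 := rfl

lemma walkWeight_cons {u v x : V} (h : G.Adj u v) (p : G.Walk v x) :
    walkWeight G w (SimpleGraph.Walk.cons h p) = w u v + walkWeight G w p := by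
  simp [walkWeight]

lemma walkWeight_append {u v x : V} (p : G.Walk u v) (q : G.Walk v x) :
    walkWeight G w (p.append q) = walkWeight G w p + walkWeight G w q := by
  simp [walkWeight, SimpleGraph.Walk.darts_append]

lemma wdist_le_walk {u v : V} (p : G.Walk u v) : wdist G w u v ≤ walkWeight G w p := iInf_le _ p

lemma wdist_self (u : V) : wdist G w u u = 0 :=
  le_antisymm (by simpa [walkWeight] using wdist_le_walk G w (SimpleGraph.Walk.nil : G.Walk u u)) zero_le

lemma wdist_triangle (u v x : V) : wdist G w u x ≤ wdist G w u v + wdist G w v x := by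
  simp only [wdist, ENNReal.iInf_add]
  refine le_iInf fun p => ?_
  simp only [ENNReal.add_iInf]
  refine le_iInf fun q => ?_
  rw [← walkWeight_append]
  exact iInf_le _ _

lemma wdist_edge {u v : V} (h : G.Adj u v) : wdist G w u v ≤ w u v := by
  simpa [walkWeight_cons, walkWeight_nil] using wdist_le_walk G w (SimpleGraph.Walk.cons h .nil)

lemma walkWeight_reverse (hw : ∀ x y, w x y = w y x) {u v : V} (p : G.Walk u v) :
    walkWeight G w p.reverse = walkWeight G w p := by
  simp only [walkWeight, SimpleGraph.Walk.darts_reverse, List.map_reverse, List.sum_reverse,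
    List.map_map]
  refine congrArg List.sum (List.map_congr_left fun d _ => ?_)
  simp only [Function.comp, SimpleGraph.Dart.symm_toProd, Prod.fst_swap, Prod.snd_swap]
  rw [hw]

lemma wdist_comm (hw : ∀ x y, w x y = w y x) (u v : V) : wdist G w u v = wdist G w v u := by
  have key : ∀ u v : V, wdist G w u v ≤ wdist G w v u := by
    intro u v
    refine le_iInf fun p => ?_
    calc wdist G w u v ≤ walkWeight G w p.reverse := wdist_le_walk G w _
      _ = walkWeight G w p := walkWeight_reverse G w hw p
  exact le_antisymm (key u v) (key v u)

lemma walk_potential (φ : V → ℝ≥0∞) (h : ∀ x y, G.Adj x y → φ y ≤ φ x + w x y)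
    {u v : V} (p : G.Walk u v) : φ v ≤ φ u + walkWeight G w p := by
  induction p with
  | nil => simp [walkWeight_nil]
  | @cons a b c hadj q ih =>
    calc φ c ≤ φ b + walkWeight G w q := ih
      _ ≤ (φ a + w a b) + walkWeight G w q := add_le_add_left (h a b hadj) _
      _ = φ a + walkWeight G w (SimpleGraph.Walk.cons hadj q) := by
        rw [walkWeight_cons]; ring

lemma wdist_chain (f : ℕ → V) (m : ℕ) :
    ∀ d : ℕ, (∀ e, m ≤ e → e < m + d → ∃ _ : G.Adj (f e) (f (e+1)), w (f e) (f (e+1)) ≤ 1) →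
    wdist G w (f m) (f (m + d)) ≤ (d : ℝ≥0∞) := by
  intro d
  induction d with
  | zero => intro _; simp [wdist_self]
  | succ n ih =>
    intro h
    obtain ⟨hadj, hle⟩ := h (m+n) (by omega) (by omega)
    calc wdist G w (f m) (f (m + (n+1)))
        ≤ wdist G w (f m) (f (m+n)) + wdist G w (f (m+n)) (f (m+n+1)) := by
          rw [show m + (n+1) = m+n+1 from by omega]; exact wdist_triangle G w _ _ _
      _ ≤ (n : ℝ≥0∞) + 1 := add_le_add (ih fun e he hlt => h e he (by omega))
          ((wdist_edge G w hadj).trans hle)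
      _ = ((n+1 : ℕ) : ℝ≥0∞) := by push_cast; ring

end Infra

section GammaAux
variable {k ℓ : ℕ} (a b : Fin k → Fin k → Bool) (Wt : ℝ≥0∞)

lemma gammaW_comm : ∀ x y : GV k ℓ, gammaW k ℓ Wt x y = gammaW k ℓ Wt y x := by
  intro x y; cases x <;> cases y <;> rfl

/-- generic enumeration of a unit path of `ℓ` edges from `s` to `e` through `mid`. -/
def chainF (s e : GV k ℓ) (mid : Fin (ℓ - 1) → GV k ℓ) (m : ℕ) : GV k ℓ :=
  if _ : m = 0 then s else if h : m ≤ ℓ - 1 then mid ⟨m - 1, by omega⟩ else e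

lemma chainF_zero (s e : GV k ℓ) (mid) : chainF s e mid 0 = s := by simp [chainF]

lemma chainF_mid (s e : GV k ℓ) (mid) (m : ℕ) (h1 : 1 ≤ m) (h2 : m ≤ ℓ - 1) :
    chainF s e mid m = mid ⟨m - 1, by omega⟩ := by
  rw [chainF, dif_neg (by omega), dif_pos h2]

lemma chainF_last (s e : GV k ℓ) (mid) (m : ℕ) (hℓ : 1 ≤ ℓ) (h : ℓ ≤ m) :
    chainF s e mid m = e := by
  rw [chainF, dif_neg (by omega), dif_neg (by omega)]

lemma chainF_adj (hℓ : 1 ≤ ℓ) (s e : GV k ℓ) (mid : Fin (ℓ - 1) → GV k ℓ)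
    (hse : ℓ ≤ 1 → gammaRel k ℓ a b s e)
    (h0 : ∀ t : Fin (ℓ - 1), t.val = 0 → gammaRel k ℓ a b s (mid t))
    (hm : ∀ t t' : Fin (ℓ - 1), t.val + 1 = t'.val → gammaRel k ℓ a b (mid t) (mid t'))
    (hl : ∀ t : Fin (ℓ - 1), t.val = ℓ - 2 → gammaRel k ℓ a b (mid t) e)
    (nse : s ≠ e) (n0 : ∀ t, s ≠ mid t) (nl : ∀ t, mid t ≠ e)
    (ninj : ∀ t t' : Fin (ℓ - 1), mid t = mid t' → t = t')
    (wse : gammaW k ℓ Wt s e ≤ 1) (w0 : ∀ t, gammaW k ℓ Wt s (mid t) ≤ 1)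
    (wm : ∀ t t', gammaW k ℓ Wt (mid t) (mid t') ≤ 1)
    (wl : ∀ t, gammaW k ℓ Wt (mid t) e ≤ 1) :
    ∀ m, m < ℓ → ∃ _ : (Gamma k ℓ a b).Adj (chainF s e mid m) (chainF s e mid (m+1)),
      gammaW k ℓ Wt (chainF s e mid m) (chainF s e mid (m+1)) ≤ 1 := by
  intro m hmlt
  by_cases hm0 : m = 0
  · subst hm0
    rw [chainF_zero]
    by_cases hl1 : ℓ = 1
    · rw [chainF_last s e mid 1 hℓ (by omega)]
      exact ⟨⟨nse, Or.inl (hse (by omega))⟩, wse⟩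
    · rw [chainF_mid s e mid 1 le_rfl (by omega)]
      exact ⟨⟨n0 _, Or.inl (h0 _ rfl)⟩, w0 _⟩
  · by_cases h2 : m + 1 ≤ ℓ - 1
    · rw [chainF_mid s e mid m (by omega) (by omega), chainF_mid s e mid (m+1) (by omega) h2]
      refine ⟨⟨fun hc => ?_, Or.inl (hm _ _ (by show m - 1 + 1 = m + 1 - 1; omega))⟩, wm _ _⟩
      have := ninj _ _ hc
      simp only [Fin.mk.injEq] at this
      omega
    · rw [chainF_mid s e mid m (by omega) (by omega), chainF_last s e mid (m+1) hℓ (by omega)]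
      exact ⟨⟨nl _, Or.inl (hl _ (by show m - 1 = ℓ - 2; omega))⟩, wl _⟩

lemma chainF_dist (hℓ : 1 ≤ ℓ) (s e : GV k ℓ) (mid : Fin (ℓ - 1) → GV k ℓ)
    (hadj : ∀ m, m < ℓ → ∃ _ : (Gamma k ℓ a b).Adj (chainF s e mid m) (chainF s e mid (m+1)),
      gammaW k ℓ Wt (chainF s e mid m) (chainF s e mid (m+1)) ≤ 1) :
    ∀ m d, m + d ≤ ℓ →
      wdist (Gamma k ℓ a b) (gammaW k ℓ Wt) (chainF s e mid m) (chainF s e mid (m+d)) ≤ (d : ℝ≥0∞) :=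
  fun m d h => wdist_chain _ _ _ m d (fun e' he' hlt => hadj e' (by omega))

end GammaAux


section GammaMore
variable {k ℓ : ℕ} (a b : Fin k → Fin k → Bool) (Wt : ℝ≥0∞)

/-- V-side core representative. -/
def Lmap : GV k ℓ → GV k ℓ
  | .V1 i => .V1 i
  | .V2 j => .V2 j
  | .U1 i => .V1 i
  | .U2 j => .V2 j
  | .P1 i _ => .V1 i
  | .P2 j _ => .V2 j
  | .M _ => .vhat
  | .vhat => .vhat
  | .uhat => .vhat

/-- U-side core representative. -/
def Rmap : GV k ℓ → GV k ℓ
  | .V1 i => .U1 i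
  | .V2 j => .U2 j
  | .U1 i => .U1 i
  | .U2 j => .U2 j
  | .P1 i _ => .U1 i
  | .P2 j _ => .U2 j
  | .M _ => .uhat
  | .vhat => .uhat
  | .uhat => .uhat

lemma path1_dist (hℓ : 1 ≤ ℓ) (i : Fin k) :
    ∀ m d, m + d ≤ ℓ → wdist (Gamma k ℓ a b) (gammaW k ℓ Wt)
      (chainF (GV.V1 i) (GV.U1 i) (GV.P1 i) m) (chainF (GV.V1 i) (GV.U1 i) (GV.P1 i) (m+d))
      ≤ (d : ℝ≥0∞) := by
  refine chainF_dist a b Wt hℓ _ _ _ (chainF_adj a b Wt hℓ _ _ _ ?_ ?_ ?_ ?_ ?_ ?_ ?_ ?_ ?_ ?_ ?_ ?_) 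
  · exact fun h => ⟨rfl, h⟩
  · exact fun t ht => ⟨rfl, ht⟩
  · exact fun t t' h => ⟨rfl, h⟩
  · exact fun t ht => ⟨rfl, ht⟩
  · simp
  · intro t; simp
  · intro t; simp
  · intro t t' h; simpa using h
  · exact le_rfl
  · intro t; exact le_rfl
  · intro t t'; exact le_rfl
  · intro t; exact le_rfl

lemma path2_dist (hℓ : 1 ≤ ℓ) (i : Fin k) :
    ∀ m d, m + d ≤ ℓ → wdist (Gamma k ℓ a b) (gammaW k ℓ Wt)
      (chainF (GV.V2 i) (GV.U2 i) (GV.P2 i) m) (chainF (GV.V2 i) (GV.U2 i) (GV.P2 i) (m+d))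
      ≤ (d : ℝ≥0∞) := by
  refine chainF_dist a b Wt hℓ _ _ _ (chainF_adj a b Wt hℓ _ _ _ ?_ ?_ ?_ ?_ ?_ ?_ ?_ ?_ ?_ ?_ ?_ ?_) 
  · exact fun h => ⟨rfl, h⟩
  · exact fun t ht => ⟨rfl, ht⟩
  · exact fun t t' h => ⟨rfl, h⟩
  · exact fun t ht => ⟨rfl, ht⟩
  · simp
  · intro t; simp
  · intro t; simp
  · intro t t' h; simpa using h
  · exact le_rfl
  · intro t; exact le_rfl
  · intro t t'; exact le_rfl
  · intro t; exact le_rfl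

lemma pathM_dist (hℓ : 1 ≤ ℓ) :
    ∀ m d, m + d ≤ ℓ → wdist (Gamma k ℓ a b) (gammaW k ℓ Wt)
      (chainF (GV.vhat) (GV.uhat) (GV.M) m) (chainF (GV.vhat) (GV.uhat) (GV.M) (m+d))
      ≤ (d : ℝ≥0∞) := by
  refine chainF_dist a b Wt hℓ _ _ _ (chainF_adj a b Wt hℓ _ _ _ ?_ ?_ ?_ ?_ ?_ ?_ ?_ ?_ ?_ ?_ ?_ ?_) 
  · exact fun h => h
  · exact fun t ht => ht
  · exact fun t t' h => h
  · exact fun t ht => ht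
  · simp
  · intro t; simp
  · intro t; simp
  · intro t t' h; simpa using h
  · exact le_rfl
  · intro t; exact le_rfl
  · intro t t'; exact le_rfl
  · intro t; exact le_rfl

lemma LR_bound (hℓ : 1 ≤ ℓ) (x : GV k ℓ) :
    wdist (Gamma k ℓ a b) (gammaW k ℓ Wt) x (Lmap x) ≤ (ℓ : ℝ≥0∞) ∧
    wdist (Gamma k ℓ a b) (gammaW k ℓ Wt) x (Rmap x) ≤ (ℓ : ℝ≥0∞) := by
  have hcomm := gammaW_comm (k := k) (ℓ := ℓ) (Wt := Wt)
  have hSE1 : ∀ i : Fin k, wdist (Gamma k ℓ a b) (gammaW k ℓ Wt) (GV.V1 i) (GV.U1 i) ≤ (ℓ : ℝ≥0∞) := by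
    intro i
    have := path1_dist a b Wt hℓ i 0 ℓ (by omega)
    rwa [chainF_zero, zero_add, chainF_last _ _ _ _ hℓ le_rfl] at this
  have hSE2 : ∀ i : Fin k, wdist (Gamma k ℓ a b) (gammaW k ℓ Wt) (GV.V2 i) (GV.U2 i) ≤ (ℓ : ℝ≥0∞) := by
    intro i
    have := path2_dist a b Wt hℓ i 0 ℓ (by omega)
    rwa [chainF_zero, zero_add, chainF_last _ _ _ _ hℓ le_rfl] at this
  have hSEM : wdist (Gamma k ℓ a b) (gammaW k ℓ Wt) GV.vhat GV.uhat ≤ (ℓ : ℝ≥0∞) := by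
    have := pathM_dist a b Wt hℓ 0 ℓ (by omega)
    rwa [chainF_zero, zero_add, chainF_last _ _ _ _ hℓ le_rfl] at this
  cases x with
  | V1 i => exact ⟨by rw [Lmap, wdist_self]; exact zero_le, hSE1 i⟩
  | V2 i => exact ⟨by rw [Lmap, wdist_self]; exact zero_le, hSE2 i⟩
  | U1 i => exact ⟨by rw [Lmap, wdist_comm _ _ hcomm]; exact hSE1 i,
      by rw [Rmap, wdist_self]; exact zero_le⟩
  | U2 i => exact ⟨by rw [Lmap, wdist_comm _ _ hcomm]; exact hSE2 i,
      by rw [Rmap, wdist_self]; exact zero_le⟩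
  | vhat => exact ⟨by rw [Lmap, wdist_self]; exact zero_le, hSEM⟩
  | uhat => exact ⟨by rw [Lmap, wdist_comm _ _ hcomm]; exact hSEM,
      by rw [Rmap, wdist_self]; exact zero_le⟩
  | P1 i t =>
    have ht := t.isLt
    constructor
    · rw [Lmap, wdist_comm _ _ hcomm]
      have := path1_dist a b Wt hℓ i 0 (t.val + 1) (by omega)
      rw [chainF_zero, zero_add, chainF_mid _ _ _ _ (by omega) (by omega)] at this
      have heq : (⟨t.val + 1 - 1, by omega⟩ : Fin (ℓ - 1)) = t := by
        apply Fin.ext; simp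
      rw [heq] at this
      exact this.trans (by exact_mod_cast (show t.val + 1 ≤ ℓ by omega))
    · rw [Rmap]
      have := path1_dist a b Wt hℓ i (t.val + 1) (ℓ - t.val - 1) (by omega)
      rw [chainF_mid _ _ _ _ (by omega) (by omega),
        chainF_last _ _ _ _ hℓ (by omega)] at this
      have heq : (⟨t.val + 1 - 1, by omega⟩ : Fin (ℓ - 1)) = t := by
        apply Fin.ext; simp
      rw [heq] at this
      exact this.trans (by exact_mod_cast (show ℓ - t.val - 1 ≤ ℓ by omega))
  | P2 i t =>
    have ht := t.isLt
    constructor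
    · rw [Lmap, wdist_comm _ _ hcomm]
      have := path2_dist a b Wt hℓ i 0 (t.val + 1) (by omega)
      rw [chainF_zero, zero_add, chainF_mid _ _ _ _ (by omega) (by omega)] at this
      have heq : (⟨t.val + 1 - 1, by omega⟩ : Fin (ℓ - 1)) = t := by
        apply Fin.ext; simp
      rw [heq] at this
      exact this.trans (by exact_mod_cast (show t.val + 1 ≤ ℓ by omega))
    · rw [Rmap]
      have := path2_dist a b Wt hℓ i (t.val + 1) (ℓ - t.val - 1) (by omega)
      rw [chainF_mid _ _ _ _ (by omega) (by omega),
        chainF_last _ _ _ _ hℓ (by omega)] at this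
      have heq : (⟨t.val + 1 - 1, by omega⟩ : Fin (ℓ - 1)) = t := by
        apply Fin.ext; simp
      rw [heq] at this
      exact this.trans (by exact_mod_cast (show ℓ - t.val - 1 ≤ ℓ by omega))
  | M t =>
    have ht := t.isLt
    constructor
    · rw [Lmap, wdist_comm _ _ hcomm]
      have := pathM_dist a b Wt hℓ 0 (t.val + 1) (by omega)
      rw [chainF_zero, zero_add, chainF_mid _ _ _ _ (by omega) (by omega)] at this
      have heq : (⟨t.val + 1 - 1, by omega⟩ : Fin (ℓ - 1)) = t := by
        apply Fin.ext; simp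
      rw [heq] at this
      exact this.trans (by exact_mod_cast (show t.val + 1 ≤ ℓ by omega))
    · rw [Rmap]
      have := pathM_dist a b Wt hℓ (t.val + 1) (ℓ - t.val - 1) (by omega)
      rw [chainF_mid _ _ _ _ (by omega) (by omega),
        chainF_last _ _ _ _ hℓ (by omega)] at this
      have heq : (⟨t.val + 1 - 1, by omega⟩ : Fin (ℓ - 1)) = t := by
        apply Fin.ext; simp
      rw [heq] at this
      exact this.trans (by exact_mod_cast (show ℓ - t.val - 1 ≤ ℓ by omega))

lemma wdist_core_edge {x y : GV k ℓ} (hne : x ≠ y)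
    (hrel : gammaRel k ℓ a b x y ∨ gammaRel k ℓ a b y x)
    (hw : gammaW k ℓ Wt x y = Wt) :
    wdist (Gamma k ℓ a b) (gammaW k ℓ Wt) x y ≤ Wt := by
  have hadj : (Gamma k ℓ a b).Adj x y := ⟨hne, hrel⟩
  simpa [hw] using wdist_edge (Gamma k ℓ a b) (gammaW k ℓ Wt) hadj

set_option maxHeartbeats 1600000 in
lemma core_cross (hdisj : ∀ i j, a i j = false ∨ b i j = false) (x y : GV k ℓ) :
    wdist (Gamma k ℓ a b) (gammaW k ℓ Wt) (Lmap x) (Lmap y) ≤ Wt ∨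
    wdist (Gamma k ℓ a b) (gammaW k ℓ Wt) (Rmap x) (Rmap y) ≤ Wt := by
  have c11 : ∀ i i' : Fin k, wdist (Gamma k ℓ a b) (gammaW k ℓ Wt) (GV.V1 i) (GV.V1 i') ≤ Wt := by
    intro i i'
    by_cases h : i = i'
    · subst h; rw [wdist_self]; exact zero_le
    · exact wdist_core_edge a b Wt (by simp [h]) (Or.inl trivial) rfl
  have c22 : ∀ i i' : Fin k, wdist (Gamma k ℓ a b) (gammaW k ℓ Wt) (GV.V2 i) (GV.V2 i') ≤ Wt := by
    intro i i'
    by_cases h : i = i'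
    · subst h; rw [wdist_self]; exact zero_le
    · exact wdist_core_edge a b Wt (by simp [h]) (Or.inl trivial) rfl
  have c1h : ∀ i : Fin k, wdist (Gamma k ℓ a b) (gammaW k ℓ Wt) (GV.V1 i) GV.vhat ≤ Wt :=
    fun i => wdist_core_edge a b Wt (by simp) (Or.inr trivial) rfl
  have ch1 : ∀ i : Fin k, wdist (Gamma k ℓ a b) (gammaW k ℓ Wt) GV.vhat (GV.V1 i) ≤ Wt :=
    fun i => wdist_core_edge a b Wt (by simp) (Or.inl trivial) rfl
  have c2h : ∀ i : Fin k, wdist (Gamma k ℓ a b) (gammaW k ℓ Wt) (GV.V2 i) GV.vhat ≤ Wt :=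
    fun i => wdist_core_edge a b Wt (by simp) (Or.inr trivial) rfl
  have ch2 : ∀ i : Fin k, wdist (Gamma k ℓ a b) (gammaW k ℓ Wt) GV.vhat (GV.V2 i) ≤ Wt :=
    fun i => wdist_core_edge a b Wt (by simp) (Or.inl trivial) rfl
  have chh : wdist (Gamma k ℓ a b) (gammaW k ℓ Wt) GV.vhat GV.vhat ≤ Wt := by
    rw [wdist_self]; exact zero_le
  have c12 : ∀ i j : Fin k,
      wdist (Gamma k ℓ a b) (gammaW k ℓ Wt) (GV.V1 i) (GV.V2 j) ≤ Wt ∨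
      wdist (Gamma k ℓ a b) (gammaW k ℓ Wt) (GV.U1 i) (GV.U2 j) ≤ Wt := by
    intro i j
    rcases hdisj i j with h | h
    · exact Or.inl (wdist_core_edge a b Wt (by simp) (Or.inl h) rfl)
    · exact Or.inr (wdist_core_edge a b Wt (by simp) (Or.inl h) rfl)
  have c21 : ∀ i j : Fin k,
      wdist (Gamma k ℓ a b) (gammaW k ℓ Wt) (GV.V2 j) (GV.V1 i) ≤ Wt ∨
      wdist (Gamma k ℓ a b) (gammaW k ℓ Wt) (GV.U2 j) (GV.U1 i) ≤ Wt := by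
    intro i j
    rcases hdisj i j with h | h
    · exact Or.inl (wdist_core_edge a b Wt (by simp) (Or.inr h) rfl)
    · exact Or.inr (wdist_core_edge a b Wt (by simp) (Or.inr h) rfl)
  cases x <;> cases y <;> simp only [Lmap, Rmap] <;>
    first
    | exact Or.inl (c11 _ _)
    | exact Or.inl (c22 _ _)
    | exact Or.inl (c1h _)
    | exact Or.inl (ch1 _)
    | exact Or.inl (c2h _)
    | exact Or.inl (ch2 _)
    | exact Or.inl chh
    | exact c12 _ _
    | exact c21 _ _

end GammaMore

/-- Lower-bound potential for the pair `(i, j)` with `a i j = b i j = true`. -/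
noncomputable def phiF (k ℓ : ℕ) (i j : Fin k) (Wt : ℝ≥0∞) : GV k ℓ → ℝ≥0∞
  | .V1 i' => if i' = i then 0 else Wt
  | .V2 j' => if j' = j then 2*Wt else Wt
  | .U1 i' => (if i' = i then 0 else Wt) + (ℓ : ℝ≥0∞)
  | .U2 j' => (if j' = j then 2*Wt else Wt) + (ℓ : ℝ≥0∞)
  | .P1 i' t => (if i' = i then 0 else Wt) + ((t.val : ℝ≥0∞) + 1)
  | .P2 j' t => (if j' = j then 2*Wt else Wt) + ((t.val : ℝ≥0∞) + 1)
  | .M t => Wt + ((t.val : ℝ≥0∞) + 1)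
  | .vhat => Wt
  | .uhat => Wt + (ℓ : ℝ≥0∞)


section Phi
variable {k ℓ : ℕ} (a b : Fin k → Fin k → Bool) (Wt : ℝ≥0∞) (i j : Fin k)

lemma phi_rel (hℓ : 1 ≤ ℓ) (ha : a i j = true) (hb : b i j = true) :
    ∀ x y : GV k ℓ, gammaRel k ℓ a b x y →
      phiF k ℓ i j Wt y ≤ phiF k ℓ i j Wt x + gammaW k ℓ Wt x y ∧
      phiF k ℓ i j Wt x ≤ phiF k ℓ i j Wt y + gammaW k ℓ Wt x y := by
  have B1 : ∀ i' i'' : Fin k,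
      (if i'' = i then (0:ℝ≥0∞) else Wt) ≤ (if i' = i then (0:ℝ≥0∞) else Wt) + Wt := by
    intro i' i''; split_ifs <;> simp [le_self_add]
  have B2 : ∀ j' j'' : Fin k,
      (if j'' = j then 2*Wt else Wt) ≤ (if j' = j then 2*Wt else Wt) + Wt := by
    intro j' j''; split_ifs <;> simp [two_mul, le_self_add, le_add_self]
  have B1W : ∀ i' : Fin k, (if i' = i then (0:ℝ≥0∞) else Wt) ≤ Wt := by
    intro i'; split_ifs <;> simp
  have WB1 : ∀ i' : Fin k, Wt ≤ (if i' = i then (0:ℝ≥0∞) else Wt) + Wt := by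
    intro i'; split_ifs <;> simp [le_self_add]
  have B2W2 : ∀ j' : Fin k, (if j' = j then 2*Wt else Wt) ≤ Wt + Wt := by
    intro j'; split_ifs <;> simp [two_mul, le_self_add]
  have WB2 : ∀ j' : Fin k, Wt ≤ (if j' = j then 2*Wt else Wt) + Wt := by
    intro j'; split_ifs <;> simp [two_mul, le_self_add, le_add_self]
  have B12 : ∀ i' j' : Fin k, a i' j' = false →
      (if j' = j then 2*Wt else Wt) ≤ (if i' = i then (0:ℝ≥0∞) else Wt) + Wt ∧
      (if i' = i then (0:ℝ≥0∞) else Wt) ≤ (if j' = j then 2*Wt else Wt) + Wt := by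
    intro i' j' hab
    rcases eq_or_ne i' i with rfl | hi <;> rcases eq_or_ne j' j with rfl | hj
    · rw [ha] at hab; cases hab
    · simp [hj, le_self_add]
    · simp [hi, two_mul, le_self_add, le_add_self]
    · simp [hi, hj, le_self_add]
  have B12b : ∀ i' j' : Fin k, b i' j' = false →
      (if j' = j then 2*Wt else Wt) ≤ (if i' = i then (0:ℝ≥0∞) else Wt) + Wt ∧
      (if i' = i then (0:ℝ≥0∞) else Wt) ≤ (if j' = j then 2*Wt else Wt) + Wt := by
    intro i' j' hab
    rcases eq_or_ne i' i with rfl | hi <;> rcases eq_or_ne j' j with rfl | hj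
    · rw [hb] at hab; cases hab
    · simp [hj, le_self_add]
    · simp [hi, two_mul, le_self_add, le_add_self]
    · simp [hi, hj, le_self_add]
  intro x y hrel
  cases x with
  | V1 i' =>
    cases y with
    | V1 i'' => exact ⟨B1 _ _, B1 _ _⟩
    | V2 j' => exact B12 _ _ hrel
    | U1 i'' =>
      obtain ⟨rfl, hl1⟩ := hrel
      simp only [phiF, gammaW]
      constructor
      · exact add_le_add_right (by exact_mod_cast (show ℓ ≤ 1 by omega)) _
      · exact le_self_add.trans le_self_add
    | P1 i'' t =>
      obtain ⟨rfl, ht0⟩ := hrel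
      simp only [phiF, gammaW]
      constructor
      · simp [ht0]
      · exact le_self_add.trans le_self_add
    | U2 j' => exact hrel.elim
    | P2 j' t => exact hrel.elim
    | M t => exact hrel.elim
    | vhat => exact hrel.elim
    | uhat => exact hrel.elim
  | V2 j' =>
    cases y with
    | V2 j'' => exact ⟨B2 _ _, B2 _ _⟩
    | U2 j'' =>
      obtain ⟨rfl, hl1⟩ := hrel
      simp only [phiF, gammaW]
      constructor
      · exact add_le_add_right (by exact_mod_cast (show ℓ ≤ 1 by omega)) _
      · exact le_self_add.trans le_self_add
    | P2 j'' t =>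
      obtain ⟨rfl, ht0⟩ := hrel
      simp only [phiF, gammaW]
      constructor
      · simp [ht0]
      · exact le_self_add.trans le_self_add
    | V1 i' => exact hrel.elim
    | U1 i' => exact hrel.elim
    | P1 i' t => exact hrel.elim
    | M t => exact hrel.elim
    | vhat => exact hrel.elim
    | uhat => exact hrel.elim
  | U1 i' =>
    cases y with
    | U1 i'' =>
      simp only [phiF, gammaW]
      constructor
      · calc (if i'' = i then (0:ℝ≥0∞) else Wt) + (ℓ:ℝ≥0∞)
            ≤ ((if i' = i then (0:ℝ≥0∞) else Wt) + Wt) + (ℓ:ℝ≥0∞) := add_le_add_left (B1 _ _) _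
          _ = ((if i' = i then (0:ℝ≥0∞) else Wt) + (ℓ:ℝ≥0∞)) + Wt := by ring
      · calc (if i' = i then (0:ℝ≥0∞) else Wt) + (ℓ:ℝ≥0∞)
            ≤ ((if i'' = i then (0:ℝ≥0∞) else Wt) + Wt) + (ℓ:ℝ≥0∞) := add_le_add_left (B1 _ _) _
          _ = ((if i'' = i then (0:ℝ≥0∞) else Wt) + (ℓ:ℝ≥0∞)) + Wt := by ring
    | U2 j' =>
      have h := B12b _ _ hrel
      simp only [phiF, gammaW]
      constructor
      · calc (if j' = j then 2*Wt else Wt) + (ℓ:ℝ≥0∞)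
            ≤ ((if i' = i then (0:ℝ≥0∞) else Wt) + Wt) + (ℓ:ℝ≥0∞) := add_le_add_left h.1 _
          _ = ((if i' = i then (0:ℝ≥0∞) else Wt) + (ℓ:ℝ≥0∞)) + Wt := by ring
      · calc (if i' = i then (0:ℝ≥0∞) else Wt) + (ℓ:ℝ≥0∞)
            ≤ ((if j' = j then 2*Wt else Wt) + Wt) + (ℓ:ℝ≥0∞) := add_le_add_left h.2 _
          _ = ((if j' = j then 2*Wt else Wt) + (ℓ:ℝ≥0∞)) + Wt := by ring
    | V1 i'' => exact hrel.elim
    | V2 j' => exact hrel.elim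
    | P1 i'' t => exact hrel.elim
    | P2 j' t => exact hrel.elim
    | M t => exact hrel.elim
    | vhat => exact hrel.elim
    | uhat => exact hrel.elim
  | U2 j' =>
    cases y with
    | U2 j'' =>
      simp only [phiF, gammaW]
      constructor
      · calc (if j'' = j then 2*Wt else Wt) + (ℓ:ℝ≥0∞)
            ≤ ((if j' = j then 2*Wt else Wt) + Wt) + (ℓ:ℝ≥0∞) := add_le_add_left (B2 _ _) _
          _ = ((if j' = j then 2*Wt else Wt) + (ℓ:ℝ≥0∞)) + Wt := by ring
      · calc (if j' = j then 2*Wt else Wt) + (ℓ:ℝ≥0∞)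
            ≤ ((if j'' = j then 2*Wt else Wt) + Wt) + (ℓ:ℝ≥0∞) := add_le_add_left (B2 _ _) _
          _ = ((if j'' = j then 2*Wt else Wt) + (ℓ:ℝ≥0∞)) + Wt := by ring
    | V1 i' => exact hrel.elim
    | V2 j'' => exact hrel.elim
    | U1 i' => exact hrel.elim
    | P1 i' t => exact hrel.elim
    | P2 j'' t => exact hrel.elim
    | M t => exact hrel.elim
    | vhat => exact hrel.elim
    | uhat => exact hrel.elim
  | P1 i' t =>
    cases y with
    | U1 i'' =>
      obtain ⟨rfl, htl⟩ := hrel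
      have ht := t.isLt
      simp only [phiF, gammaW]
      constructor
      · rw [add_assoc]
        exact add_le_add_right (by exact_mod_cast (show ℓ ≤ t.val + 1 + 1 by omega)) _
      · rw [add_assoc]
        exact add_le_add_right (by exact_mod_cast (show t.val + 1 ≤ ℓ + 1 by omega)) _
    | P1 i'' s =>
      obtain ⟨rfl, hts⟩ := hrel
      simp only [phiF, gammaW]
      constructor
      · rw [add_assoc]
        exact add_le_add_right (by exact_mod_cast (show s.val + 1 ≤ t.val + 1 + 1 by omega)) _
      · rw [add_assoc]
        exact add_le_add_right (by exact_mod_cast (show t.val + 1 ≤ s.val + 1 + 1 by omega)) _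
    | V1 i'' => exact hrel.elim
    | V2 j'' => exact hrel.elim
    | U2 j'' => exact hrel.elim
    | P2 j'' s => exact hrel.elim
    | M s => exact hrel.elim
    | vhat => exact hrel.elim
    | uhat => exact hrel.elim
  | P2 j' t =>
    cases y with
    | U2 j'' =>
      obtain ⟨rfl, htl⟩ := hrel
      have ht := t.isLt
      simp only [phiF, gammaW]
      constructor
      · rw [add_assoc]
        exact add_le_add_right (by exact_mod_cast (show ℓ ≤ t.val + 1 + 1 by omega)) _
      · rw [add_assoc]
        exact add_le_add_right (by exact_mod_cast (show t.val + 1 ≤ ℓ + 1 by omega)) _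
    | P2 j'' s =>
      obtain ⟨rfl, hts⟩ := hrel
      simp only [phiF, gammaW]
      constructor
      · rw [add_assoc]
        exact add_le_add_right (by exact_mod_cast (show s.val + 1 ≤ t.val + 1 + 1 by omega)) _
      · rw [add_assoc]
        exact add_le_add_right (by exact_mod_cast (show t.val + 1 ≤ s.val + 1 + 1 by omega)) _
    | V1 i'' => exact hrel.elim
    | V2 j'' => exact hrel.elim
    | U1 i'' => exact hrel.elim
    | P1 i'' s => exact hrel.elim
    | M s => exact hrel.elim
    | vhat => exact hrel.elim
    | uhat => exact hrel.elim
  | M t =>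
    cases y with
    | uhat =>
      have htl : t.val = ℓ - 2 := hrel
      have ht := t.isLt
      simp only [phiF, gammaW]
      constructor
      · rw [add_assoc]
        exact add_le_add_right (by exact_mod_cast (show ℓ ≤ t.val + 1 + 1 by omega)) _
      · rw [add_assoc]
        exact add_le_add_right (by exact_mod_cast (show t.val + 1 ≤ ℓ + 1 by omega)) _
    | M s =>
      have hts : t.val + 1 = s.val := hrel
      simp only [phiF, gammaW]
      constructor
      · rw [add_assoc]
        exact add_le_add_right (by exact_mod_cast (show s.val + 1 ≤ t.val + 1 + 1 by omega)) _
      · rw [add_assoc]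
        exact add_le_add_right (by exact_mod_cast (show t.val + 1 ≤ s.val + 1 + 1 by omega)) _
    | V1 i'' => exact hrel.elim
    | V2 j'' => exact hrel.elim
    | U1 i'' => exact hrel.elim
    | U2 j'' => exact hrel.elim
    | P1 i'' s => exact hrel.elim
    | P2 j'' s => exact hrel.elim
    | vhat => exact hrel.elim
  | vhat =>
    cases y with
    | V1 i'' =>
      simp only [phiF, gammaW]
      exact ⟨(B1W _).trans le_self_add, WB1 _⟩
    | V2 j'' =>
      simp only [phiF, gammaW]
      exact ⟨B2W2 _, WB2 _⟩
    | uhat =>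
      have hl1 : ℓ ≤ 1 := hrel
      simp only [phiF, gammaW]
      constructor
      · exact add_le_add_right (by exact_mod_cast (show ℓ ≤ 1 by omega)) _
      · exact le_self_add.trans le_self_add
    | M s =>
      have ht0 : s.val = 0 := hrel
      simp only [phiF, gammaW]
      constructor
      · simp [ht0]
      · exact le_self_add.trans le_self_add
    | U1 i'' => exact hrel.elim
    | U2 j'' => exact hrel.elim
    | P1 i'' s => exact hrel.elim
    | P2 j'' s => exact hrel.elim
    | vhat => exact hrel.elim
  | uhat =>
    cases y with
    | U1 i'' =>
      simp only [phiF, gammaW]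
      constructor
      · exact ((add_le_add_left (B1W _) _).trans le_self_add)
      · calc Wt + (ℓ:ℝ≥0∞)
            ≤ ((if i'' = i then (0:ℝ≥0∞) else Wt) + Wt) + (ℓ:ℝ≥0∞) := add_le_add_left (WB1 _) _
          _ = ((if i'' = i then (0:ℝ≥0∞) else Wt) + (ℓ:ℝ≥0∞)) + Wt := by ring
    | U2 j'' =>
      simp only [phiF, gammaW]
      constructor
      · calc (if j'' = j then 2*Wt else Wt) + (ℓ:ℝ≥0∞)
            ≤ (Wt + Wt) + (ℓ:ℝ≥0∞) := add_le_add_left (B2W2 _) _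
          _ = (Wt + (ℓ:ℝ≥0∞)) + Wt := by ring
      · calc Wt + (ℓ:ℝ≥0∞)
            ≤ ((if j'' = j then 2*Wt else Wt) + Wt) + (ℓ:ℝ≥0∞) := add_le_add_left (WB2 _) _
          _ = ((if j'' = j then 2*Wt else Wt) + (ℓ:ℝ≥0∞)) + Wt := by ring
    | V1 i'' => exact hrel.elim
    | V2 j'' => exact hrel.elim
    | P1 i'' s => exact hrel.elim
    | P2 j'' s => exact hrel.elim
    | M s => exact hrel.elim
    | vhat => exact hrel.elim
    | uhat => exact hrel.elim

end Phi

/-- weighted diameter gap of Γ^{a,b}_{k,ℓ,W} for W > ℓ ≥ 1: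
if `a` and `b` are disjoint then every pair of vertices is at distance at most
`W + 2ℓ`; otherwise some pair is at distance at least `2W + ℓ`. -/
theorem gamma_weighted_diameter_gap (k ℓ : ℕ) (hk : 1 ≤ k) (hℓ : 1 ≤ ℓ)
    (a b : Fin k → Fin k → Bool) (Wt : ℝ≥0∞) (hWt : (ℓ : ℝ≥0∞) < Wt) (hWtop : Wt ≠ ⊤) :
    ((∀ i j, a i j = false ∨ b i j = false) →
      ∀ x y : GV k ℓ,
        wdist (Gamma k ℓ a b) (gammaW k ℓ Wt) x y ≤ Wt + 2 * ℓ) ∧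
    ((∃ i j, a i j = true ∧ b i j = true) →
      ∃ x y : GV k ℓ,
        2 * Wt + ℓ ≤ wdist (Gamma k ℓ a b) (gammaW k ℓ Wt) x y) := by
  constructor
  · -- upper bound
    intro hdisj x y
    obtain ⟨hxL, hxR⟩ := LR_bound a b Wt hℓ x
    obtain ⟨hyL, hyR⟩ := LR_bound a b Wt hℓ y
    have hcomm := gammaW_comm (k := k) (ℓ := ℓ) (Wt := Wt)
    rcases core_cross a b Wt hdisj x y with h | h
    · calc wdist (Gamma k ℓ a b) (gammaW k ℓ Wt) x y
          ≤ wdist (Gamma k ℓ a b) (gammaW k ℓ Wt) x (Lmap x) +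
            wdist (Gamma k ℓ a b) (gammaW k ℓ Wt) (Lmap x) y := wdist_triangle _ _ _ _ _
        _ ≤ wdist (Gamma k ℓ a b) (gammaW k ℓ Wt) x (Lmap x) +
            (wdist (Gamma k ℓ a b) (gammaW k ℓ Wt) (Lmap x) (Lmap y) +
             wdist (Gamma k ℓ a b) (gammaW k ℓ Wt) (Lmap y) y) :=
            add_le_add_right (wdist_triangle _ _ _ _ _) _
        _ ≤ (ℓ:ℝ≥0∞) + (Wt + (ℓ:ℝ≥0∞)) := add_le_add hxL (add_le_add h
            (by rw [wdist_comm _ _ hcomm]; exact hyL))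
        _ = Wt + 2 * (ℓ:ℝ≥0∞) := by ring
    · calc wdist (Gamma k ℓ a b) (gammaW k ℓ Wt) x y
          ≤ wdist (Gamma k ℓ a b) (gammaW k ℓ Wt) x (Rmap x) +
            wdist (Gamma k ℓ a b) (gammaW k ℓ Wt) (Rmap x) y := wdist_triangle _ _ _ _ _
        _ ≤ wdist (Gamma k ℓ a b) (gammaW k ℓ Wt) x (Rmap x) +
            (wdist (Gamma k ℓ a b) (gammaW k ℓ Wt) (Rmap x) (Rmap y) +
             wdist (Gamma k ℓ a b) (gammaW k ℓ Wt) (Rmap y) y) :=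
            add_le_add_right (wdist_triangle _ _ _ _ _) _
        _ ≤ (ℓ:ℝ≥0∞) + (Wt + (ℓ:ℝ≥0∞)) := add_le_add hxR (add_le_add h
            (by rw [wdist_comm _ _ hcomm]; exact hyR))
        _ = Wt + 2 * (ℓ:ℝ≥0∞) := by ring
  · -- lower bound
    rintro ⟨i, j, ha, hb⟩
    refine ⟨GV.V1 i, GV.U2 j, ?_⟩
    have hfeas : ∀ x y, (Gamma k ℓ a b).Adj x y →
        phiF k ℓ i j Wt y ≤ phiF k ℓ i j Wt x + gammaW k ℓ Wt x y := by
      rintro x y ⟨hne, hrel | hrel⟩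
      · exact (phi_rel a b Wt i j hℓ ha hb x y hrel).1
      · rw [gammaW_comm]
        exact (phi_rel a b Wt i j hℓ ha hb y x hrel).2
    rw [wdist]
    refine le_iInf fun p => ?_
    have hpot := walk_potential (Gamma k ℓ a b) (gammaW k ℓ Wt) (phiF k ℓ i j Wt) hfeas p
    simp only [phiF, eq_self_iff_true, if_true, zero_add] at hpot
    exact hpot
end

section
/- In the graph $\Gamma^{a,b}_{k,\ell,1}$ (all weights equal to 1): the bit strings $a, b \in \{0,1\}^{k^2}$ are disjoint (there is no index $i$ with $a_i = b_i = 1$) if and only if the (unweighted) diameter of $\Gamma^{a,b}_{k,\ell,1}$ is $\ell + 1$; otherwise the diameter is $\ell + 2$. -/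
open scoped ENNReal

section GammaAux

open GV SimpleGraph

lemma gammaW_one (k ℓ : ℕ) (x y : GV k ℓ) : gammaW k ℓ 1 x y = 1 := by
  cases x <;> cases y <;> rfl

lemma walkWeight_eq_length {V : Type*} (G : SimpleGraph V) (w : V → V → ℝ≥0∞)
    (hw : ∀ x y, w x y = 1) {u v : V} (p : G.Walk u v) :
    walkWeight G w p = p.length := by
  induction p with
  | nil => simp [walkWeight]
  | @cons u x v h q ih =>
    rw [walkWeight] at ih ⊢
    rw [Walk.darts_cons, List.map_cons, List.sum_cons, hw, ih, Walk.length_cons]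
    push_cast
    ring

lemma wdist_le_of_walk {V : Type*} (G : SimpleGraph V) (w : V → V → ℝ≥0∞)
    (hw : ∀ x y, w x y = 1) {u v : V} (p : G.Walk u v) (n : ℕ) (h : p.length ≤ n) :
    wdist G w u v ≤ (n : ℝ≥0∞) := by
  refine le_trans (iInf_le _ p) ?_
  rw [walkWeight_eq_length G w hw]
  exact_mod_cast Nat.cast_le.mpr h

lemma le_wdist_of_forall {V : Type*} (G : SimpleGraph V) (w : V → V → ℝ≥0∞)
    (hw : ∀ x y, w x y = 1) {u v : V} (n : ℕ)
    (h : ∀ p : G.Walk u v, n ≤ p.length) :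
    (n : ℝ≥0∞) ≤ wdist G w u v := by
  refine le_iInf fun p => ?_
  rw [walkWeight_eq_length G w hw]
  exact_mod_cast Nat.cast_le.mpr (h p)

end GammaAux
section Chains
open SimpleGraph

lemma chain_up {V : Type*} (G : SimpleGraph V) (ℓ : ℕ) (top : V) (mid : Fin (ℓ-1) → V)
    (hm : ∀ t s : Fin (ℓ-1), t.val + 1 = s.val → G.Adj (mid t) (mid s))
    (h2 : ∀ t : Fin (ℓ-1), t.val = ℓ - 2 → G.Adj (mid t) top) :
    ∀ t : Fin (ℓ-1), ∃ p : G.Walk (mid t) top, p.length = ℓ - 1 - t.val := by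
  suffices H : ∀ n (t : Fin (ℓ-1)), ℓ - 2 - t.val = n →
      ∃ p : G.Walk (mid t) top, p.length = ℓ - 1 - t.val from fun t => H _ t rfl
  intro n
  induction n with
  | zero =>
    intro t ht
    have h := t.isLt
    have he : t.val = ℓ - 2 := by omega
    exact ⟨Walk.cons (h2 t he) Walk.nil, by simp; omega⟩
  | succ n ih =>
    intro t ht
    have h := t.isLt
    have hs : t.val + 1 < ℓ - 1 := by omega
    obtain ⟨q, hq⟩ := ih ⟨t.val+1, hs⟩ (by simp; omega)
    exact ⟨Walk.cons (hm t ⟨t.val+1, hs⟩ rfl) q, by simp [hq]; omega⟩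

lemma chain_down {V : Type*} (G : SimpleGraph V) (ℓ : ℕ) (bot : V) (mid : Fin (ℓ-1) → V)
    (hm : ∀ t s : Fin (ℓ-1), t.val + 1 = s.val → G.Adj (mid t) (mid s))
    (h1 : ∀ t : Fin (ℓ-1), t.val = 0 → G.Adj bot (mid t)) :
    ∀ t : Fin (ℓ-1), ∃ p : G.Walk (mid t) bot, p.length = t.val + 1 := by
  suffices H : ∀ n (t : Fin (ℓ-1)), t.val = n →
      ∃ p : G.Walk (mid t) bot, p.length = t.val + 1 from fun t => H _ t rfl
  intro n
  induction n with
  | zero =>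
    intro t ht
    exact ⟨Walk.cons (h1 t ht).symm Walk.nil, by simp [ht]⟩
  | succ n ih =>
    intro t ht
    have h := t.isLt
    have hs : n < ℓ - 1 := by omega
    obtain ⟨q, hq⟩ := ih ⟨n, hs⟩ rfl
    refine ⟨Walk.cons (hm ⟨n, hs⟩ t (by simp [ht])).symm q, by simp [hq]; omega⟩

lemma chain_full {V : Type*} (G : SimpleGraph V) (ℓ : ℕ) (hℓ : 1 ≤ ℓ)
    (bot top : V) (mid : Fin (ℓ-1) → V)
    (hshort : ℓ = 1 → G.Adj bot top)
    (h1 : ∀ t : Fin (ℓ-1), t.val = 0 → G.Adj bot (mid t))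
    (hm : ∀ t s : Fin (ℓ-1), t.val + 1 = s.val → G.Adj (mid t) (mid s))
    (h2 : ∀ t : Fin (ℓ-1), t.val = ℓ - 2 → G.Adj (mid t) top) :
    ∃ p : G.Walk bot top, p.length = ℓ := by
  rcases eq_or_lt_of_le hℓ with h | h
  · exact ⟨Walk.cons (hshort h.symm) Walk.nil, by simp [← h]⟩
  · have h0 : 0 < ℓ - 1 := by omega
    obtain ⟨q, hq⟩ := chain_up G ℓ top mid hm h2 ⟨0, h0⟩
    exact ⟨Walk.cons (h1 ⟨0, h0⟩ rfl) q, by simp [hq]; omega⟩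

end Chains
section GammaChains
open GV SimpleGraph

variable {k ℓ : ℕ} {a b : Fin k → Fin k → Bool}

lemma gadj {x y : GV k ℓ} (h : x ≠ y)
    (h' : gammaRel k ℓ a b x y ∨ gammaRel k ℓ a b y x) : (Gamma k ℓ a b).Adj x y := by
  rw [Gamma, SimpleGraph.fromRel_adj]; exact ⟨h, h'⟩

lemma chain1_full (hℓ : 1 ≤ ℓ) (i : Fin k) :
    ∃ p : (Gamma k ℓ a b).Walk (V1 i) (U1 i), p.length = ℓ :=
  chain_full _ ℓ hℓ (V1 i) (U1 i) (GV.P1 i)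
    (fun h => gadj (by simp) (Or.inl ⟨rfl, by omega⟩))
    (fun t ht => gadj (by simp) (Or.inl ⟨rfl, ht⟩))
    (fun t s hts => gadj
      (by simp only [ne_eq, GV.P1.injEq, not_and]; exact fun _ => Fin.ne_of_val_ne (by omega))
      (Or.inl ⟨rfl, hts⟩))
    (fun t ht => gadj (by simp) (Or.inl ⟨rfl, ht⟩))

lemma chain2_full (hℓ : 1 ≤ ℓ) (i : Fin k) :
    ∃ p : (Gamma k ℓ a b).Walk (V2 i) (U2 i), p.length = ℓ :=
  chain_full _ ℓ hℓ (V2 i) (U2 i) (GV.P2 i)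
    (fun h => gadj (by simp) (Or.inl ⟨rfl, by omega⟩))
    (fun t ht => gadj (by simp) (Or.inl ⟨rfl, ht⟩))
    (fun t s hts => gadj
      (by simp only [ne_eq, GV.P2.injEq, not_and]; exact fun _ => Fin.ne_of_val_ne (by omega))
      (Or.inl ⟨rfl, hts⟩))
    (fun t ht => gadj (by simp) (Or.inl ⟨rfl, ht⟩))

lemma chainM_full (hℓ : 1 ≤ ℓ) :
    ∃ p : (Gamma k ℓ a b).Walk (GV.vhat : GV k ℓ) GV.uhat, p.length = ℓ :=
  chain_full _ ℓ hℓ GV.vhat GV.uhat GV.M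
    (fun h => gadj (by simp) (Or.inl (show ℓ ≤ 1 by omega)))
    (fun t ht => gadj (by simp) (Or.inl ht))
    (fun t s hts => gadj
      (by simp only [ne_eq, GV.M.injEq]; exact Fin.ne_of_val_ne (by omega))
      (Or.inl hts))
    (fun t ht => gadj (by simp) (Or.inl ht))

lemma chain1_down (i : Fin k) (t : Fin (ℓ-1)) :
    ∃ p : (Gamma k ℓ a b).Walk (P1 i t) (V1 i), p.length = t.val + 1 :=
  chain_down _ ℓ (V1 i) (GV.P1 i)
    (fun t s hts => gadj
      (by simp only [ne_eq, GV.P1.injEq, not_and]; exact fun _ => Fin.ne_of_val_ne (by omega))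
      (Or.inl ⟨rfl, hts⟩))
    (fun t ht => gadj (by simp) (Or.inl ⟨rfl, ht⟩)) t

lemma chain2_down (i : Fin k) (t : Fin (ℓ-1)) :
    ∃ p : (Gamma k ℓ a b).Walk (P2 i t) (V2 i), p.length = t.val + 1 :=
  chain_down _ ℓ (V2 i) (GV.P2 i)
    (fun t s hts => gadj
      (by simp only [ne_eq, GV.P2.injEq, not_and]; exact fun _ => Fin.ne_of_val_ne (by omega))
      (Or.inl ⟨rfl, hts⟩))
    (fun t ht => gadj (by simp) (Or.inl ⟨rfl, ht⟩)) t

lemma chainM_down (t : Fin (ℓ-1)) :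
    ∃ p : (Gamma k ℓ a b).Walk (M t) (GV.vhat : GV k ℓ), p.length = t.val + 1 :=
  chain_down _ ℓ GV.vhat GV.M
    (fun t s hts => gadj
      (by simp only [ne_eq, GV.M.injEq]; exact Fin.ne_of_val_ne (by omega))
      (Or.inl hts))
    (fun t ht => gadj (by simp) (Or.inl ht)) t

lemma chain1_up (i : Fin k) (t : Fin (ℓ-1)) :
    ∃ p : (Gamma k ℓ a b).Walk (P1 i t) (U1 i), p.length = ℓ - 1 - t.val :=
  chain_up _ ℓ (U1 i) (GV.P1 i)
    (fun t s hts => gadj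
      (by simp only [ne_eq, GV.P1.injEq, not_and]; exact fun _ => Fin.ne_of_val_ne (by omega))
      (Or.inl ⟨rfl, hts⟩))
    (fun t ht => gadj (by simp) (Or.inl ⟨rfl, ht⟩)) t

lemma chain2_up (i : Fin k) (t : Fin (ℓ-1)) :
    ∃ p : (Gamma k ℓ a b).Walk (P2 i t) (U2 i), p.length = ℓ - 1 - t.val :=
  chain_up _ ℓ (U2 i) (GV.P2 i)
    (fun t s hts => gadj
      (by simp only [ne_eq, GV.P2.injEq, not_and]; exact fun _ => Fin.ne_of_val_ne (by omega))
      (Or.inl ⟨rfl, hts⟩))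
    (fun t ht => gadj (by simp) (Or.inl ⟨rfl, ht⟩)) t

lemma chainM_up (t : Fin (ℓ-1)) :
    ∃ p : (Gamma k ℓ a b).Walk (M t) (GV.uhat : GV k ℓ), p.length = ℓ - 1 - t.val :=
  chain_up _ ℓ GV.uhat GV.M
    (fun t s hts => gadj
      (by simp only [ne_eq, GV.M.injEq]; exact Fin.ne_of_val_ne (by omega))
      (Or.inl hts))
    (fun t ht => gadj (by simp) (Or.inl ht)) t

end GammaChains
section Anchors
open GV SimpleGraph

inductive Ch (k : ℕ) : Type
  | c1 (i : Fin k) : Ch k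
  | c2 (i : Fin k) : Ch k
  | cM : Ch k

variable {k ℓ : ℕ} {a b : Fin k → Fin k → Bool}

def chBot : Ch k → GV k ℓ
  | .c1 i => .V1 i
  | .c2 i => .V2 i
  | .cM => .vhat

def chTop : Ch k → GV k ℓ
  | .c1 i => .U1 i
  | .c2 i => .U2 i
  | .cM => .uhat

def chainOf : GV k ℓ → Ch k
  | .V1 i => .c1 i | .P1 i _ => .c1 i | .U1 i => .c1 i
  | .V2 i => .c2 i | .P2 i _ => .c2 i | .U2 i => .c2 i
  | .vhat => .cM | .M _ => .cM | .uhat => .cM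

def layer : GV k ℓ → ℕ
  | .V1 _ => 0 | .V2 _ => 0 | .vhat => 0
  | .P1 _ t => t.val + 1 | .P2 _ t => t.val + 1 | .M t => t.val + 1
  | .U1 _ => ℓ | .U2 _ => ℓ | .uhat => ℓ

lemma layer_le (x : GV k ℓ) : layer x ≤ ℓ := by
  cases x <;> simp [layer] <;> (rename_i t; have := t.isLt) <;> omega

lemma down_walk (hℓ : 1 ≤ ℓ) (x : GV k ℓ) :
    ∃ p : (Gamma k ℓ a b).Walk x (chBot (chainOf x)), p.length = layer x := by
  cases x with
  | V1 i => exact ⟨Walk.nil, rfl⟩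
  | V2 i => exact ⟨Walk.nil, rfl⟩
  | vhat => exact ⟨Walk.nil, rfl⟩
  | P1 i t => exact chain1_down i t
  | P2 i t => exact chain2_down i t
  | M t => exact chainM_down t
  | U1 i => obtain ⟨p, hp⟩ := chain1_full (a := a) (b := b) hℓ i
            exact ⟨p.reverse, (Walk.length_reverse p).trans hp⟩
  | U2 i => obtain ⟨p, hp⟩ := chain2_full (a := a) (b := b) hℓ i
            exact ⟨p.reverse, (Walk.length_reverse p).trans hp⟩
  | uhat => obtain ⟨p, hp⟩ := chainM_full (k := k) (a := a) (b := b) hℓ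
            exact ⟨p.reverse, (Walk.length_reverse p).trans hp⟩

lemma up_walk (hℓ : 1 ≤ ℓ) (x : GV k ℓ) :
    ∃ p : (Gamma k ℓ a b).Walk x (chTop (chainOf x)), p.length = ℓ - layer x := by
  cases x with
  | U1 i => exact ⟨Walk.nil, by simp [layer]; rfl⟩
  | U2 i => exact ⟨Walk.nil, by simp [layer]; rfl⟩
  | uhat => exact ⟨Walk.nil, by simp [layer]; rfl⟩
  | P1 i t => obtain ⟨p, hp⟩ := chain1_up (a := a) (b := b) i t
              exact ⟨p, by show p.length = ℓ - (t.val + 1); omega⟩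
  | P2 i t => obtain ⟨p, hp⟩ := chain2_up (a := a) (b := b) i t
              exact ⟨p, by show p.length = ℓ - (t.val + 1); omega⟩
  | M t => obtain ⟨p, hp⟩ := chainM_up (a := a) (b := b) t
           exact ⟨p, by show p.length = ℓ - (t.val + 1); omega⟩
  | V1 i => obtain ⟨p, hp⟩ := chain1_full (a := a) (b := b) hℓ i
            exact ⟨p, by show p.length = ℓ - 0; omega⟩
  | V2 i => obtain ⟨p, hp⟩ := chain2_full (a := a) (b := b) hℓ i
            exact ⟨p, by show p.length = ℓ - 0; omega⟩
  | vhat => obtain ⟨p, hp⟩ := chainM_full (k := k) (a := a) (b := b) hℓ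
            exact ⟨p, by show p.length = ℓ - 0; omega⟩

end Anchors
section Conn
open GV SimpleGraph

variable {k ℓ : ℕ} {a b : Fin k → Fin k → Bool}

lemma adj_vhat_V1 (i : Fin k) : (Gamma k ℓ a b).Adj GV.vhat (V1 i) :=
  gadj (by simp) (Or.inl trivial)
lemma adj_vhat_V2 (i : Fin k) : (Gamma k ℓ a b).Adj GV.vhat (V2 i) :=
  gadj (by simp) (Or.inl trivial)
lemma adj_uhat_U1 (i : Fin k) : (Gamma k ℓ a b).Adj GV.uhat (U1 i) :=
  gadj (by simp) (Or.inl trivial)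
lemma adj_uhat_U2 (i : Fin k) : (Gamma k ℓ a b).Adj GV.uhat (U2 i) :=
  gadj (by simp) (Or.inl trivial)

lemma conn_bot (c d : Ch k) :
    ∃ p : (Gamma k ℓ a b).Walk (chBot c) (chBot d), p.length ≤ 2 := by
  match c, d with
  | .cM, .cM => exact ⟨Walk.nil, by simp⟩
  | .cM, .c1 i => simp only [chBot]; exact ⟨Walk.cons (adj_vhat_V1 i) Walk.nil, by simp⟩
  | .cM, .c2 i => simp only [chBot]; exact ⟨Walk.cons (adj_vhat_V2 i) Walk.nil, by simp⟩
  | .c1 i, .cM => simp only [chBot]; exact ⟨Walk.cons (adj_vhat_V1 i).symm Walk.nil, by simp⟩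
  | .c2 i, .cM => simp only [chBot]; exact ⟨Walk.cons (adj_vhat_V2 i).symm Walk.nil, by simp⟩
  | .c1 i, .c1 j =>
    simp only [chBot]; exact ⟨Walk.cons (adj_vhat_V1 i).symm (Walk.cons (adj_vhat_V1 j) Walk.nil), by simp⟩
  | .c1 i, .c2 j =>
    simp only [chBot]; exact ⟨Walk.cons (adj_vhat_V1 i).symm (Walk.cons (adj_vhat_V2 j) Walk.nil), by simp⟩
  | .c2 i, .c1 j =>
    simp only [chBot]; exact ⟨Walk.cons (adj_vhat_V2 i).symm (Walk.cons (adj_vhat_V1 j) Walk.nil), by simp⟩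
  | .c2 i, .c2 j =>
    simp only [chBot]; exact ⟨Walk.cons (adj_vhat_V2 i).symm (Walk.cons (adj_vhat_V2 j) Walk.nil), by simp⟩

lemma conn_top (c d : Ch k) :
    ∃ p : (Gamma k ℓ a b).Walk (chTop c) (chTop d), p.length ≤ 2 := by
  match c, d with
  | .cM, .cM => exact ⟨Walk.nil, by simp⟩
  | .cM, .c1 i => simp only [chTop]; exact ⟨Walk.cons (adj_uhat_U1 i) Walk.nil, by simp⟩
  | .cM, .c2 i => simp only [chTop]; exact ⟨Walk.cons (adj_uhat_U2 i) Walk.nil, by simp⟩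
  | .c1 i, .cM => simp only [chTop]; exact ⟨Walk.cons (adj_uhat_U1 i).symm Walk.nil, by simp⟩
  | .c2 i, .cM => simp only [chTop]; exact ⟨Walk.cons (adj_uhat_U2 i).symm Walk.nil, by simp⟩
  | .c1 i, .c1 j =>
    simp only [chTop]; exact ⟨Walk.cons (adj_uhat_U1 i).symm (Walk.cons (adj_uhat_U1 j) Walk.nil), by simp⟩
  | .c1 i, .c2 j =>
    simp only [chTop]; exact ⟨Walk.cons (adj_uhat_U1 i).symm (Walk.cons (adj_uhat_U2 j) Walk.nil), by simp⟩
  | .c2 i, .c1 j =>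
    simp only [chTop]; exact ⟨Walk.cons (adj_uhat_U2 i).symm (Walk.cons (adj_uhat_U1 j) Walk.nil), by simp⟩
  | .c2 i, .c2 j =>
    simp only [chTop]; exact ⟨Walk.cons (adj_uhat_U2 i).symm (Walk.cons (adj_uhat_U2 j) Walk.nil), by simp⟩

lemma key_conn (hd : ∀ i j, a i j = true → b i j = false) (c d : Ch k) :
    (∃ p : (Gamma k ℓ a b).Walk (chBot c) (chBot d), p.length ≤ 1) ∨
    (∃ p : (Gamma k ℓ a b).Walk (chTop c) (chTop d), p.length ≤ 1) := by
  match c, d with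
  | .cM, .cM => exact Or.inl ⟨Walk.nil, by simp⟩
  | .cM, .c1 i => simp only [chBot, chTop]; exact Or.inl ⟨Walk.cons (adj_vhat_V1 i) Walk.nil, by simp⟩
  | .cM, .c2 i => simp only [chBot, chTop]; exact Or.inl ⟨Walk.cons (adj_vhat_V2 i) Walk.nil, by simp⟩
  | .c1 i, .cM => simp only [chBot, chTop]; exact Or.inl ⟨Walk.cons (adj_vhat_V1 i).symm Walk.nil, by simp⟩
  | .c2 i, .cM => simp only [chBot, chTop]; exact Or.inl ⟨Walk.cons (adj_vhat_V2 i).symm Walk.nil, by simp⟩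
  | .c1 i, .c1 j =>
    by_cases h : i = j
    · subst h; exact Or.inl ⟨Walk.nil, by simp⟩
    · simp only [chBot, chTop]
      exact Or.inl ⟨Walk.cons (gadj (x := GV.V1 i) (y := GV.V1 j) (fun hc => h (by injection hc)) (Or.inl trivial)) Walk.nil,
        by simp⟩
  | .c2 i, .c2 j =>
    by_cases h : i = j
    · subst h; exact Or.inl ⟨Walk.nil, by simp⟩
    · simp only [chBot, chTop]
      exact Or.inl ⟨Walk.cons (gadj (x := GV.V2 i) (y := GV.V2 j) (fun hc => h (by injection hc)) (Or.inl trivial)) Walk.nil,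
        by simp⟩
  | .c1 i, .c2 j =>
    simp only [chBot, chTop]
    cases ha : a i j with
    | false => exact Or.inl ⟨Walk.cons (gadj (x := GV.V1 i) (y := GV.V2 j) (by simp) (Or.inl ha)) Walk.nil, by simp⟩
    | true => exact Or.inr ⟨Walk.cons (gadj (x := GV.U1 i) (y := GV.U2 j) (by simp) (Or.inl (hd i j ha))) Walk.nil, by simp⟩
  | .c2 i, .c1 j =>
    simp only [chBot, chTop]
    cases ha : a j i with
    | false => exact Or.inl ⟨Walk.cons (gadj (x := GV.V2 i) (y := GV.V1 j) (by simp) (Or.inr ha)) Walk.nil, by simp⟩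
    | true => exact Or.inr ⟨Walk.cons (gadj (x := GV.U2 i) (y := GV.U1 j) (by simp) (Or.inr (hd j i ha))) Walk.nil, by simp⟩

end Conn
section UB
open GV SimpleGraph

variable {k ℓ : ℕ} {a b : Fin k → Fin k → Bool}

lemma ub_all (hℓ : 1 ≤ ℓ) (x y : GV k ℓ) :
    wdist (Gamma k ℓ a b) (gammaW k ℓ 1) x y ≤ ((ℓ + 2 : ℕ) : ℝ≥0∞) := by
  obtain ⟨px, hpx⟩ := down_walk (a := a) (b := b) hℓ x
  obtain ⟨py, hpy⟩ := down_walk (a := a) (b := b) hℓ y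
  obtain ⟨qx, hqx⟩ := up_walk (a := a) (b := b) hℓ x
  obtain ⟨qy, hqy⟩ := up_walk (a := a) (b := b) hℓ y
  have hx := layer_le x; have hy := layer_le y
  rcases le_or_gt (layer x + layer y) ℓ with h | h
  · obtain ⟨r, hr⟩ := conn_bot (a := a) (b := b) (ℓ := ℓ) (chainOf x) (chainOf y)
    refine wdist_le_of_walk _ _ (gammaW_one k ℓ) (px.append (r.append py.reverse)) _ ?_
    simp only [Walk.length_append, Walk.length_reverse, hpx, hpy]
    omega
  · obtain ⟨r, hr⟩ := conn_top (a := a) (b := b) (ℓ := ℓ) (chainOf x) (chainOf y)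
    refine wdist_le_of_walk _ _ (gammaW_one k ℓ) (qx.append (r.append qy.reverse)) _ ?_
    simp only [Walk.length_append, Walk.length_reverse, hqx, hqy]
    omega

lemma ub_disj (hℓ : 1 ≤ ℓ) (hd : ∀ i j, a i j = true → b i j = false) (x y : GV k ℓ) :
    wdist (Gamma k ℓ a b) (gammaW k ℓ 1) x y ≤ ((ℓ + 1 : ℕ) : ℝ≥0∞) := by
  obtain ⟨px, hpx⟩ := down_walk (a := a) (b := b) hℓ x
  obtain ⟨py, hpy⟩ := down_walk (a := a) (b := b) hℓ y
  obtain ⟨qx, hqx⟩ := up_walk (a := a) (b := b) hℓ x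
  obtain ⟨qy, hqy⟩ := up_walk (a := a) (b := b) hℓ y
  have hx := layer_le x; have hy := layer_le y
  rcases lt_trichotomy (layer x + layer y) ℓ with h | h | h
  · obtain ⟨r, hr⟩ := conn_bot (a := a) (b := b) (ℓ := ℓ) (chainOf x) (chainOf y)
    refine wdist_le_of_walk _ _ (gammaW_one k ℓ) (px.append (r.append py.reverse)) _ ?_
    simp only [Walk.length_append, Walk.length_reverse, hpx, hpy]
    omega
  · rcases key_conn hd (chainOf x) (chainOf y) with ⟨r, hr⟩ | ⟨r, hr⟩
    · refine wdist_le_of_walk _ _ (gammaW_one k ℓ) (px.append (r.append py.reverse)) _ ?_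
      simp only [Walk.length_append, Walk.length_reverse, hpx, hpy]
      omega
    · refine wdist_le_of_walk _ _ (gammaW_one k ℓ) (qx.append (r.append qy.reverse)) _ ?_
      simp only [Walk.length_append, Walk.length_reverse, hqx, hqy]
      omega
  · obtain ⟨r, hr⟩ := conn_top (a := a) (b := b) (ℓ := ℓ) (chainOf x) (chainOf y)
    refine wdist_le_of_walk _ _ (gammaW_one k ℓ) (qx.append (r.append qy.reverse)) _ ?_
    simp only [Walk.length_append, Walk.length_reverse, hqx, hqy]
    omega

end UB
section LB
open GV SimpleGraph

def pot (k ℓ : ℕ) (a b : Fin k → Fin k → Bool) (j : Fin k) : GV k ℓ → ℕ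
  | .V1 m => if a m j && b m j then ℓ+2 else ℓ+1
  | .V2 m => if m = j then ℓ else ℓ+1
  | .vhat => ℓ+1
  | .P1 m t => (if b m j then ℓ+1 else ℓ) - t.val
  | .P2 m t => (if m = j then ℓ-1 else ℓ) - t.val
  | .M t => ℓ - t.val
  | .U1 m => if b m j then 2 else 1
  | .U2 m => if m = j then 0 else 1
  | .uhat => 1

variable {k ℓ : ℕ} {a b : Fin k → Fin k → Bool}

lemma pot_lip (j : Fin k) (x y : GV k ℓ) (h : gammaRel k ℓ a b x y) :
    pot k ℓ a b j x ≤ pot k ℓ a b j y + 1 ∧ pot k ℓ a b j y ≤ pot k ℓ a b j x + 1 := by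
  cases x <;> cases y <;> simp only [gammaRel] at h <;>
    (try obtain ⟨rfl, h⟩ := h) <;>
    simp only [pot] <;>
    constructor <;>
    (try split_ifs) <;>
    first
    | omega
    | simp_all
    | (simp_all; omega)

lemma pot_walk (j : Fin k) {u v : GV k ℓ} (p : (Gamma k ℓ a b).Walk u v) :
    pot k ℓ a b j u ≤ pot k ℓ a b j v + p.length := by
  induction p with
  | nil => simp
  | @cons u x v h q ih =>
    rw [Gamma, SimpleGraph.fromRel_adj] at h
    obtain ⟨-, hrel⟩ := h
    have hux : pot k ℓ a b j u ≤ pot k ℓ a b j x + 1 := by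
      rcases hrel with h' | h'
      · exact (pot_lip j _ _ h').1
      · exact (pot_lip j _ _ h').2
    rw [Walk.length_cons]
    omega

lemma lb_all (i j : Fin k) (p : (Gamma k ℓ a b).Walk (V1 i) (U2 j)) :
    ℓ + 1 ≤ p.length := by
  have h := pot_walk j p
  simp only [pot] at h
  split_ifs at h <;> simp_all <;> omega

lemma lb_bad (i j : Fin k) (ha : a i j = true) (hb : b i j = true)
    (p : (Gamma k ℓ a b).Walk (V1 i) (U2 j)) :
    ℓ + 2 ≤ p.length := by
  have h := pot_walk j p
  simp only [pot, ha, hb] at h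
  split_ifs at h <;> simp_all <;> omega

end LB
/-- unweighted diameter of Γ^{a,b}_{k,ℓ,1}: the bit strings `a`, `b`
are disjoint iff the diameter is `ℓ + 1`; otherwise the diameter is `ℓ + 2`. -/
theorem gamma_unweighted_diameter (k ℓ : ℕ) (hk : 1 ≤ k) (hℓ : 1 ≤ ℓ)
    (a b : Fin k → Fin k → Bool) :
    ((¬ ∃ i j, a i j = true ∧ b i j = true) ↔
      (⨆ (x : GV k ℓ) (y : GV k ℓ), wdist (Gamma k ℓ a b) (gammaW k ℓ 1) x y)
        = (ℓ : ℝ≥0∞) + 1) ∧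
    ((∃ i j, a i j = true ∧ b i j = true) →
      (⨆ (x : GV k ℓ) (y : GV k ℓ), wdist (Gamma k ℓ a b) (gammaW k ℓ 1) x y)
        = (ℓ : ℝ≥0∞) + 2) := by
  have P2 : (∃ i j, a i j = true ∧ b i j = true) →
      (⨆ (x : GV k ℓ) (y : GV k ℓ), wdist (Gamma k ℓ a b) (gammaW k ℓ 1) x y)
        = (ℓ : ℝ≥0∞) + 2 := by
    rintro ⟨i, j, ha, hb⟩
    apply le_antisymm
    · refine iSup_le fun x => iSup_le fun y => ?_
      refine le_trans (ub_all hℓ x y) (le_of_eq ?_)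
      push_cast; ring
    · have h1 : ((ℓ + 2 : ℕ) : ℝ≥0∞) ≤
          wdist (Gamma k ℓ a b) (gammaW k ℓ 1) (GV.V1 i) (GV.U2 j) :=
        le_wdist_of_forall _ _ (gammaW_one k ℓ) _ (fun p => lb_bad i j ha hb p)
      calc (ℓ : ℝ≥0∞) + 2 = ((ℓ + 2 : ℕ) : ℝ≥0∞) := by push_cast; ring
        _ ≤ wdist (Gamma k ℓ a b) (gammaW k ℓ 1) (GV.V1 i) (GV.U2 j) := h1
        _ ≤ _ := le_iSup₂ (f := fun x y => wdist (Gamma k ℓ a b) (gammaW k ℓ 1) x y)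
            (GV.V1 i) (GV.U2 j)
  refine ⟨⟨?_, ?_⟩, P2⟩
  · intro hnd
    have hd : ∀ i j, a i j = true → b i j = false := by
      intro i j hij
      by_contra hb
      exact hnd ⟨i, j, hij, by simpa using hb⟩
    apply le_antisymm
    · refine iSup_le fun x => iSup_le fun y => ?_
      refine le_trans (ub_disj hℓ hd x y) (le_of_eq ?_)
      push_cast; ring
    · set i0 : Fin k := ⟨0, hk⟩
      have h1 : ((ℓ + 1 : ℕ) : ℝ≥0∞) ≤
          wdist (Gamma k ℓ a b) (gammaW k ℓ 1) (GV.V1 i0) (GV.U2 i0) :=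
        le_wdist_of_forall _ _ (gammaW_one k ℓ) _ (fun p => lb_all i0 i0 p)
      calc (ℓ : ℝ≥0∞) + 1 = ((ℓ + 1 : ℕ) : ℝ≥0∞) := by push_cast; ring
        _ ≤ wdist (Gamma k ℓ a b) (gammaW k ℓ 1) (GV.V1 i0) (GV.U2 i0) := h1
        _ ≤ _ := le_iSup₂ (f := fun x y => wdist (Gamma k ℓ a b) (gammaW k ℓ 1) x y)
            (GV.V1 i0) (GV.U2 i0)
  · intro hS
    by_contra hex
    have h2 := P2 hex
    rw [hS] at h2
    have h3 : (1 : ℝ≥0∞) = 2 :=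
      (ENNReal.add_right_inj (ENNReal.natCast_ne_top ℓ)).mp h2
    norm_num at h3
end
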